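/- arXiv:2510.10498 — 3 statements merged into one kernel-verified Lean document; each statement's English description precedes it below -/
import Mathlib

section
/- Let G be a graph of order n ≥ 2 with e(G) edges. Then q(G) ≤ 2e(G)/(n−1) + n − 2. -/
open scoped Classical ENNReal

noncomputable def signlessLaplacian {V : Type*} [Fintype V] [DecidableEq V]
    (G : SimpleGraph V) : Matrix V V ℝ :=
  Matrix.of fun u v =>
    (if u = v then ((G.neighborSet u).ncard : ℝ) else 0) + (if G.Adj u v then 1 else 0)

/-- The `Q`-index: the largest eigenvalue of the signless Laplacian `D(G) + A(G)`. -/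
noncomputable def qIndex {V : Type*} [Fintype V] [DecidableEq V]
    (G : SimpleGraph V) : ℝ :=
  sSup (spectrum ℝ (signlessLaplacian G))

/-- `K_s ∨ (K_{ns 0} ∪ K_{ns 1} ∪ ⋯)` : the join of a clique of size `s` with a
disjoint union of cliques of sizes `ns i`. -/
def joinCliques (s : ℕ) {t : ℕ} (ns : Fin t → ℕ) :
    SimpleGraph (Fin s ⊕ (Σ i : Fin t, Fin (ns i))) where
  Adj u v := u ≠ v ∧ ((∃ a, u = Sum.inl a) ∨ (∃ a, v = Sum.inl a) ∨
      ∃ (i : Fin t) (x y : Fin (ns i)), u = Sum.inr ⟨i, x⟩ ∧ v = Sum.inr ⟨i, y⟩)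
  symm := by
    constructor
    rintro u v ⟨hne, h⟩
    refine ⟨hne.symm, ?_⟩
    rcases h with ⟨a, ha⟩ | ⟨a, ha⟩ | ⟨i, x, y, hx, hy⟩
    · exact Or.inr (Or.inl ⟨a, ha⟩)
    · exact Or.inl ⟨a, ha⟩
    · exact Or.inr (Or.inr ⟨i, y, x, hy, hx⟩)
  loopless := ⟨fun u h => h.1 rfl⟩

/-- `c(G - S)`: number of connected components after deleting the vertex set `S`. -/
noncomputable def numComp {V : Type*} (G : SimpleGraph V) (S : Set V) : ℕ :=
  Nat.card (G.induce Sᶜ).ConnectedComponent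

/-- The `l`-toughness `t_l(G) = min { |S| / c(G-S) : S ⊂ V(G), c(G-S) ≥ l }`,
with value `+∞` (the empty infimum in `ℝ≥0∞`) if no such `S` exists. -/
noncomputable def lToughness {V : Type*} [Fintype V] (G : SimpleGraph V) (l : ℕ) : ℝ≥0∞ :=
  ⨅ (S : Finset V) (_ : l ≤ numComp G (S : Set V)),
    (S.card : ℝ≥0∞) / (numComp G (S : Set V) : ℝ≥0∞)


open Finset SimpleGraph

section Aux

variable {V : Type*} [Fintype V] [DecidableEq V] (G : SimpleGraph V)

/-- Handshake: sum of degrees over the neighborhood plus the degree of `v` is at most `2e`. -/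
lemma aux_handshake (v : V) :
    ∑ u ∈ G.neighborFinset v, G.degree u + G.degree v ≤ 2 * G.edgeFinset.card := by
  classical
  have h1 : ∑ u ∈ insert v (G.neighborFinset v), G.degree u ≤ ∑ u, G.degree u :=
    Finset.sum_le_sum_of_subset (Finset.subset_univ _)
  rw [Finset.sum_insert (G.notMem_neighborFinset_self v)] at h1
  rw [← SimpleGraph.sum_degrees_eq_twice_card_edges]
  omega

/-- Each degree is at most `n - 1`, so the neighborhood degree sum is at most `d(n-1)`. -/
lemma aux_deg_bound (v : V) :
    ∑ u ∈ G.neighborFinset v, G.degree u ≤ G.degree v * (Fintype.card V - 1) := by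
  classical
  calc ∑ u ∈ G.neighborFinset v, G.degree u
      ≤ ∑ _u ∈ G.neighborFinset v, (Fintype.card V - 1) :=
        Finset.sum_le_sum fun u _ => Nat.le_pred_of_lt (G.degree_lt_card_verts u)
    _ = G.degree v * (Fintype.card V - 1) := by
        rw [Finset.sum_const, smul_eq_mul]; rfl

/-- Key counting: `2s + d ≤ 2e + d²` where `s` is the neighborhood degree sum. -/
lemma aux_count (v : V) :
    2 * (∑ u ∈ G.neighborFinset v, G.degree u) + G.degree v
      ≤ 2 * G.edgeFinset.card + G.degree v * G.degree v := by
  classical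
  set N := G.neighborFinset v with hN
  set A : Finset (V × V) := (N ×ˢ Finset.univ).filter (fun p => G.Adj p.1 p.2) with hA
  have hmemA : ∀ p ∈ A, p.1 ∈ N ∧ G.Adj p.1 p.2 := by
    intro p hp
    rw [hA, Finset.mem_filter, Finset.mem_product] at hp
    exact ⟨hp.1.1, hp.2⟩
  -- s = |A|
  have hs : ∑ u ∈ N, G.degree u = A.card := by
    rw [Finset.card_eq_sum_card_fiberwise (f := Prod.fst) (t := N)
      (fun p hp => (hmemA p hp).1)]
    refine Finset.sum_congr rfl fun u hu => ?_
    have : G.degree u = (G.neighborFinset u).card := rfl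
    rw [this]
    refine (Finset.card_nbij' (i := Prod.snd) (j := fun w => (u, w)) ?_ ?_ ?_ ?_).symm
    · intro p hp
      rw [Finset.mem_coe, Finset.mem_filter] at hp
      obtain ⟨hpA, hpu⟩ := hp
      rw [Finset.mem_coe, SimpleGraph.mem_neighborFinset, ← hpu]
      exact (hmemA p hpA).2
    · intro w hw
      rw [Finset.mem_coe, SimpleGraph.mem_neighborFinset] at hw
      rw [Finset.mem_coe]
      refine Finset.mem_filter.2 ⟨?_, rfl⟩
      rw [hA, Finset.mem_filter, Finset.mem_product]
      exact ⟨⟨hu, Finset.mem_univ _⟩, hw⟩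
    · intro p hp
      rw [Finset.mem_coe, Finset.mem_filter] at hp
      exact Prod.ext hp.2.symm rfl
    · intro w _; rfl
  set P : Finset (V × V) := A.filter (fun p => p.2 ∈ N) with hP
  set F : Finset (V × V) := A.filter (fun p => p.2 ∉ N) with hF
  have hPF : P.card + F.card = A.card := Finset.card_filter_add_card_filter_not _
  -- P ⊆ offDiag N
  have hPoff : P.card + N.card ≤ N.card * N.card := by
    have hsub : P ⊆ N.offDiag := by
      intro p hp
      rw [hP, Finset.mem_filter] at hp
      obtain ⟨hpA, hp2⟩ := hp
      exact Finset.mem_offDiag.2 ⟨(hmemA p hpA).1, hp2, (hmemA p hpA).2.ne⟩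
    have h1 := Finset.card_le_card hsub
    rw [Finset.offDiag_card] at h1
    have h2 : N.card ≤ N.card * N.card := by
      rcases Nat.eq_zero_or_pos N.card with h | h
      · simp [h]
      · exact Nat.le_mul_of_pos_left _ h
    omega
  set φ : V × V → Sym2 V := fun p => s(p.1, p.2) with hφ
  -- P.card ≤ 2 * |φ '' P|
  have hPim : P.card ≤ 2 * (P.image φ).card := by
    refine Finset.card_le_mul_card_image _ 2 ?_
    intro b hb
    obtain ⟨q, _, rfl⟩ := Finset.mem_image.1 hb
    have hsub : (P.filter fun p => φ p = φ q) ⊆ insert q {q.swap} := by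
      intro p hp
      rw [Finset.mem_filter] at hp
      have hpq' : s(p.1, p.2) = s(q.1, q.2) := hp.2
      rcases Sym2.mk_eq_mk_iff.1 hpq' with h | h
      · exact Finset.mem_insert.2 (Or.inl h)
      · exact Finset.mem_insert.2 (Or.inr (by simp [h]))
    calc (P.filter fun p => φ p = φ q).card ≤ (insert q ({q.swap} : Finset (V × V))).card :=
          Finset.card_le_card hsub
      _ ≤ 2 := by
          refine (Finset.card_insert_le _ _).trans ?_
          simp
  -- φ is injective on F
  have hFim : F.card = (F.image φ).card := by
    refine (Finset.card_image_of_injOn ?_).symm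
    intro p hp q hq hpq
    have hp' := Finset.mem_filter.1 (Finset.mem_coe.1 hp)
    have hq' := Finset.mem_filter.1 (Finset.mem_coe.1 hq)
    have hpq' : s(p.1, p.2) = s(q.1, q.2) := hpq
    rcases Sym2.mk_eq_mk_iff.1 hpq' with h | h
    · exact h
    · exfalso
      have h1 : p.1 = q.2 := by rw [h]; rfl
      exact hq'.2 (h1 ▸ (hmemA p hp'.1).1)
  -- images are disjoint and within the edge set
  have hunion : (P.image φ).card + (F.image φ).card ≤ G.edgeFinset.card := by
    have hdisj : Disjoint (P.image φ) (F.image φ) := by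
      rw [Finset.disjoint_left]
      intro a haP haF
      obtain ⟨p, hp, rfl⟩ := Finset.mem_image.1 haP
      obtain ⟨q, hq, hqa⟩ := Finset.mem_image.1 haF
      rw [hP, Finset.mem_filter] at hp
      rw [hF, Finset.mem_filter] at hq
      have hpq' : s(q.1, q.2) = s(p.1, p.2) := hqa
      rcases Sym2.mk_eq_mk_iff.1 hpq' with h | h
      · exact hq.2 (by rw [h]; exact hp.2)
      · have h2 : q.2 = p.1 := by rw [h]; rfl
        exact hq.2 (h2 ▸ (hmemA p hp.1).1)
    rw [← Finset.card_union_of_disjoint hdisj]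
    refine Finset.card_le_card ?_
    intro a ha
    rcases Finset.mem_union.1 ha with h | h <;>
    · obtain ⟨p, hp, rfl⟩ := Finset.mem_image.1 h
      have hadj : G.Adj p.1 p.2 := (hmemA p (Finset.mem_filter.1 hp).1).2
      rw [hφ]
      exact SimpleGraph.mem_edgeFinset.2 hadj
  have hdN : G.degree v = N.card := rfl
  rw [hs, hdN, ← hPF]
  linarith
end Aux

section RealIneq

/-- The purely real-variable inequality. -/
lemma aux_real (n d e s : ℝ) (h1 : 1 ≤ d) (h2 : d = n - 1 ∨ d ≤ n - 2)
    (h4 : s + d ≤ 2 * e) (h5 : s ≤ d * (n - 1)) (h6 : 2 * s + d ≤ 2 * e + d * d) :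
    (n - 1) * (d ^ 2 + s) ≤ (2 * e + (n - 1) * (n - 2)) * d := by
  rcases h2 with h2 | h2
  · subst h2
    nlinarith [h4, h1]
  · have h2' : d ≤ n - 1 := by linarith
    nlinarith [mul_nonneg (sub_nonneg.2 h2) (sub_nonneg.2 h5),
      mul_nonneg (sub_nonneg.2 h2) (sub_nonneg.2 h6),
      mul_nonneg (sub_nonneg.2 h2) (sub_nonneg.2 h4),
      mul_nonneg (sub_nonneg.2 h1) (sub_nonneg.2 h4),
      mul_nonneg (sub_nonneg.2 h1) (sub_nonneg.2 h6),
      sq_nonneg (d - 1),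
      mul_nonneg (sub_nonneg.2 h2) (sub_nonneg.2 h2')]

end RealIneq


/-- **Lemma 2.4.** For a graph `G` of order `n ≥ 2`, `q(G) ≤ 2e(G)/(n−1) + n − 2`. -/
theorem statement5 {V : Type*} [Fintype V] [DecidableEq V]
    (G : SimpleGraph V) (hn : 2 ≤ Fintype.card V) :
    qIndex G ≤ 2 * (G.edgeSet.ncard : ℝ) / ((Fintype.card V : ℝ) - 1)
      + (Fintype.card V : ℝ) - 2 := by
  classical
  set n : ℕ := Fintype.card V with hnn
  have he : G.edgeSet.ncard = G.edgeFinset.card := by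
    rw [← Nat.card_coe_set_eq, Nat.card_eq_fintype_card, ← SimpleGraph.edgeFinset_card]
  set e : ℕ := G.edgeFinset.card with hee
  have hn1 : (0:ℝ) < (n : ℝ) - 1 := by
    have : (2:ℝ) ≤ (n : ℝ) := by exact_mod_cast hn
    linarith
  have hB0 : (0:ℝ) ≤ 2 * (e : ℝ) / ((n : ℝ) - 1) + (n : ℝ) - 2 := by
    have h1 : (0:ℝ) ≤ 2 * (e : ℝ) / ((n : ℝ) - 1) := by positivity
    have : (2:ℝ) ≤ (n : ℝ) := by exact_mod_cast hn
    linarith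
  rw [he]
  refine Real.sSup_le ?_ hB0
  intro μ hμ
  rcases le_or_gt μ 0 with hμ0 | hμ0
  · linarith
  -- extract an eigenvector
  have hspec : spectrum ℝ (Matrix.toLinAlgEquiv' (signlessLaplacian G)) =
      spectrum ℝ (signlessLaplacian G) := AlgEquiv.spectrum_eq _ _
  have hev : Module.End.HasEigenvalue (Matrix.toLinAlgEquiv' (signlessLaplacian G)) μ :=
    Module.End.hasEigenvalue_iff_mem_spectrum.2 (hspec ▸ hμ)
  obtain ⟨y, hy⟩ := hev.exists_hasEigenvector
  have hnc : ∀ u : V, ((G.neighborSet u).ncard : ℕ) = G.degree u := by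
    intro u
    rw [← Nat.card_coe_set_eq, Nat.card_eq_fintype_card,
      SimpleGraph.card_neighborSet_eq_degree]
  have heig : ∀ v : V, μ * y v = (G.degree v : ℝ) * y v + ∑ u ∈ G.neighborFinset v, y u := by
    intro v
    have h1 : (signlessLaplacian G).mulVec y v = μ * y v := by
      have h2 := congrFun hy.apply_eq_smul v
      have h3 : (Matrix.toLinAlgEquiv' (signlessLaplacian G)) y
          = (signlessLaplacian G).mulVec y := rfl
      rw [h3] at h2
      simpa using h2
    rw [← h1]
    simp only [Matrix.mulVec, dotProduct, signlessLaplacian, Matrix.of_apply,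
      add_mul, ite_mul, zero_mul, one_mul]
    rw [Finset.sum_add_distrib]
    congr 1
    · simp [hnc v]
    · rw [SimpleGraph.neighborFinset_eq_filter, Finset.sum_filter]
  -- isolated vertices carry no weight
  have hiso : ∀ v : V, G.degree v = 0 → y v = 0 := by
    intro v hv
    have h1 := heig v
    rw [hv] at h1
    have h2 : G.neighborFinset v = ∅ := Finset.card_eq_zero.1 hv
    rw [h2] at h1
    simp at h1
    rcases h1 with h1 | h1
    · exact absurd h1 (ne_of_gt hμ0)
    · exact h1
  -- choose the maximizing vertex for |y|/d
  set f : V → ℝ := fun v => if G.degree v = 0 then 0 else |y v| / (G.degree v : ℝ) with hf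
  have hneV : Nonempty V := Fintype.card_pos_iff.1 (by omega)
  have hne : (Finset.univ : Finset V).Nonempty := Finset.univ_nonempty
  obtain ⟨v, -, hvmax⟩ := Finset.exists_max_image Finset.univ f hne
  have hfdef : ∀ u : V, G.degree u ≠ 0 → f u = |y u| / (G.degree u : ℝ) := by
    intro u hu
    simp only [hf]
    exact if_neg hu
  have hf0 : ∀ u : V, G.degree u = 0 → f u = 0 := by
    intro u hu
    simp only [hf]
    exact if_pos hu
  have hub : ∀ u : V, |y u| ≤ f v * (G.degree u : ℝ) := by
    intro u
    rcases Nat.eq_zero_or_pos (G.degree u) with h | h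
    · rw [hiso u h, h]; simp
    · have hfu : f u = |y u| / (G.degree u : ℝ) := hfdef u h.ne' 
      have hdu : (0:ℝ) < (G.degree u : ℝ) := by exact_mod_cast h
      have := hvmax u (Finset.mem_univ u)
      rw [hfu] at this
      calc |y u| = |y u| / (G.degree u : ℝ) * (G.degree u : ℝ) := by field_simp
        _ ≤ f v * (G.degree u : ℝ) := by
            exact mul_le_mul_of_nonneg_right this hdu.le
  have hfv0 : 0 < f v := by
    obtain ⟨u, hu⟩ := Function.ne_iff.1 hy.right
    have hdu : G.degree u ≠ 0 := fun h => hu (hiso u h)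
    have hdu' : (0:ℝ) < (G.degree u : ℝ) := by
      exact_mod_cast Nat.pos_of_ne_zero hdu
    have hfu : f u = |y u| / (G.degree u : ℝ) := hfdef u hdu
    have h1 : 0 < f u := by
      rw [hfu]
      exact div_pos (abs_pos.2 hu) hdu'
    exact h1.trans_le (hvmax u (Finset.mem_univ u))
  have hdv : G.degree v ≠ 0 := by
    intro h
    rw [hf0 v h] at hfv0
    exact lt_irrefl _ hfv0
  have hdv' : (0:ℝ) < (G.degree v : ℝ) := by exact_mod_cast Nat.pos_of_ne_zero hdv
  have hyv : |y v| = f v * (G.degree v : ℝ) := by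
    rw [hfdef v hdv]; field_simp
  -- the spectral inequality  μ * d ≤ d² + s
  set s : ℕ := ∑ u ∈ G.neighborFinset v, G.degree u with hss
  have hspec2 : μ * (G.degree v : ℝ) ≤ (G.degree v : ℝ) ^ 2 + (s : ℝ) := by
    have h1 : μ * |y v| ≤ (G.degree v : ℝ) * |y v| + ∑ u ∈ G.neighborFinset v, |y u| := by
      calc μ * |y v| = |μ * y v| := by
            rw [abs_mul, abs_of_pos hμ0]
        _ = |(G.degree v : ℝ) * y v + ∑ u ∈ G.neighborFinset v, y u| := by rw [heig v]
        _ ≤ |(G.degree v : ℝ) * y v| + |∑ u ∈ G.neighborFinset v, y u| := abs_add_le _ _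
        _ ≤ (G.degree v : ℝ) * |y v| + ∑ u ∈ G.neighborFinset v, |y u| := by
            gcongr
            · rw [abs_mul, abs_of_nonneg (by positivity : (0:ℝ) ≤ (G.degree v : ℝ))]
            · exact Finset.abs_sum_le_sum_abs _ _
    have h2 : ∑ u ∈ G.neighborFinset v, |y u| ≤ f v * (s : ℝ) := by
      rw [hss]
      push_cast
      rw [Finset.mul_sum]
      exact Finset.sum_le_sum fun u _ => hub u
    have h3 : μ * (f v * (G.degree v : ℝ)) ≤
        (G.degree v : ℝ) * (f v * (G.degree v : ℝ)) + f v * (s : ℝ) := by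
      rw [← hyv]; nlinarith [h1, h2]
    have h4 : f v * (μ * (G.degree v : ℝ)) ≤ f v * ((G.degree v : ℝ) ^ 2 + (s : ℝ)) := by
      nlinarith [h3]
    have := (mul_le_mul_iff_of_pos_left hfv0).1 h4
    linarith
  -- the combinatorial inequality
  have hcomb : ((n : ℝ) - 1) * ((G.degree v : ℝ) ^ 2 + (s : ℝ)) ≤
      (2 * (e : ℝ) + ((n : ℝ) - 1) * ((n : ℝ) - 2)) * (G.degree v : ℝ) := by
    have hd1 : (1:ℝ) ≤ (G.degree v : ℝ) := by exact_mod_cast Nat.pos_of_ne_zero hdv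
    have hdlt : G.degree v < n := G.degree_lt_card_verts v
    have h2 : (G.degree v : ℝ) = (n : ℝ) - 1 ∨ (G.degree v : ℝ) ≤ (n : ℝ) - 2 := by
      by_cases hcase : G.degree v = n - 1
      · left
        rw [hcase, Nat.cast_sub (by omega)]
        simp
      · right
        have hle2 : G.degree v ≤ n - 2 := by omega
        calc (G.degree v : ℝ) ≤ ((n - 2 : ℕ) : ℝ) := by exact_mod_cast hle2
          _ = (n : ℝ) - 2 := by rw [Nat.cast_sub (by omega)]; simp
    have h4 : (s : ℝ) + (G.degree v : ℝ) ≤ 2 * (e : ℝ) := by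
      exact_mod_cast aux_handshake G v
    have h5 : (s : ℝ) ≤ (G.degree v : ℝ) * ((n : ℝ) - 1) := by
      have := aux_deg_bound G v
      calc (s : ℝ) ≤ ((G.degree v * (n - 1) : ℕ) : ℝ) := by exact_mod_cast this
        _ = (G.degree v : ℝ) * ((n : ℝ) - 1) := by
            push_cast [Nat.cast_sub (by omega : 1 ≤ n)]
            ring
    have h6 : 2 * (s : ℝ) + (G.degree v : ℝ) ≤
        2 * (e : ℝ) + (G.degree v : ℝ) * (G.degree v : ℝ) := by
      exact_mod_cast aux_count G v
    exact aux_real (n : ℝ) (G.degree v : ℝ) (e : ℝ) (s : ℝ) hd1 h2 h4 h5 h6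
  -- combine
  have hfinal : ((n : ℝ) - 1) * μ ≤ 2 * (e : ℝ) + ((n : ℝ) - 1) * ((n : ℝ) - 2) := by
    have h1 : ((n : ℝ) - 1) * (μ * (G.degree v : ℝ)) ≤
        (2 * (e : ℝ) + ((n : ℝ) - 1) * ((n : ℝ) - 2)) * (G.degree v : ℝ) := by
      calc ((n : ℝ) - 1) * (μ * (G.degree v : ℝ))
          ≤ ((n : ℝ) - 1) * ((G.degree v : ℝ) ^ 2 + (s : ℝ)) := by
            exact mul_le_mul_of_nonneg_left hspec2 hn1.le
        _ ≤ _ := hcomb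
    have h2 : ((n : ℝ) - 1) * μ * (G.degree v : ℝ) ≤
        (2 * (e : ℝ) + ((n : ℝ) - 1) * ((n : ℝ) - 2)) * (G.degree v : ℝ) := by
      linarith [h1, mul_assoc ((n : ℝ) - 1) μ (G.degree v : ℝ)]
    exact le_of_mul_le_mul_right h2 hdv'
  have : μ ≤ (2 * (e : ℝ) + ((n : ℝ) - 1) * ((n : ℝ) - 2)) / ((n : ℝ) - 1) := by
    rw [le_div_iff₀ hn1]
    linarith [hfinal, mul_comm μ ((n : ℝ) - 1)]
  calc μ ≤ (2 * (e : ℝ) + ((n : ℝ) - 1) * ((n : ℝ) - 2)) / ((n : ℝ) - 1) := this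
    _ = 2 * (e : ℝ) / ((n : ℝ) - 1) + (n : ℝ) - 2 := by
        field_simp
        ring
end

section
/- Let b ≥ 1 and l ≥ 2 be integers and let n ≥ (b+1)l − 1. Then the graph G = K_{bl−1} ∨ (K_{n−(b+1)l+2} ∪ (l−1)K_1) satisfies t_l(G) ≤ (bl−1)/l < b; in particular, G is not (b,l)-tough. -/
open scoped Classical ENNReal

lemma numComp_joinCliques (s t : ℕ) (ht : 0 < t) (ns : Fin t → ℕ) (hns : ∀ i, 1 ≤ ns i) :
    numComp (joinCliques s ns) {v | v.isLeft} = t := by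
  classical
  set G := joinCliques s ns with hG
  set Sc : Set (Fin s ⊕ (Σ i : Fin t, Fin (ns i))) := {v | v.isLeft}ᶜ with hSc
  have hmem : ∀ v : Sc, ∃ p : Σ i : Fin t, Fin (ns i), v.val = Sum.inr p := by
    rintro ⟨v, hv⟩
    rcases v with a | p
    · exact absurd rfl hv
    · exact ⟨p, rfl⟩
  let idx : (Fin s ⊕ (Σ i : Fin t, Fin (ns i))) → Fin t :=
    Sum.elim (fun _ => ⟨0, ht⟩) (fun p => p.1)
  have hadj : ∀ u v : Sc, (G.induce Sc).Adj u v → idx u.val = idx v.val := by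
    intro u v h
    have h' : G.Adj u.val v.val := h
    obtain ⟨hne, hcase⟩ := h'
    obtain ⟨p, hp⟩ := hmem u
    obtain ⟨q, hq⟩ := hmem v
    rcases hcase with ⟨a, ha⟩ | ⟨a, ha⟩ | ⟨i, x, y, hx, hy⟩
    · rw [hp] at ha; simp at ha
    · rw [hq] at ha; simp at ha
    · simp [idx, hx, hy]
  have hwalk : ∀ (u v : Sc) (p : (G.induce Sc).Walk u v), idx u.val = idx v.val := by
    intro u v p
    induction p with
    | nil => rfl
    | cons h _ ih => exact (hadj _ _ h).trans ih
  let f : (G.induce Sc).ConnectedComponent → Fin t :=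
    SimpleGraph.ConnectedComponent.lift (fun v => idx v.val) (fun u v p _ => hwalk u v p)
  have hbij : Function.Bijective f := by
    constructor
    · intro c d
      refine SimpleGraph.ConnectedComponent.ind₂ (fun u v hf => ?_) c d
      simp only [f, SimpleGraph.ConnectedComponent.lift_mk] at hf
      obtain ⟨⟨i, x⟩, hp⟩ := hmem u
      obtain ⟨⟨j, y⟩, hq⟩ := hmem v
      simp only [idx, hp, hq, Sum.elim_inr] at hf
      subst hf
      apply SimpleGraph.ConnectedComponent.sound
      by_cases hxy : x = y
      · have huv : u = v := Subtype.ext (by rw [hp, hq, hxy])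
        exact huv ▸ SimpleGraph.Reachable.refl _
      · refine SimpleGraph.Adj.reachable (?_ : G.Adj u.val v.val)
        refine ⟨?_, Or.inr (Or.inr ⟨i, x, y, hp, hq⟩)⟩
        rw [hp, hq]
        simp [hxy]
    · intro i
      refine ⟨(G.induce Sc).connectedComponentMk
        ⟨Sum.inr ⟨i, ⟨0, hns i⟩⟩, by simp [hSc]⟩, ?_⟩
      simp [f, idx]
  have hcard := Nat.card_eq_of_bijective f hbij
  simpa [numComp, hSc] using hcard

/-- For `b ≥ 1`, `l ≥ 2` and `n ≥ (b+1)l − 1`, the graph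
`G = K_{bl−1} ∨ (K_{n−(b+1)l+2} ∪ (l−1)K₁)` satisfies `t_l(G) ≤ (bl−1)/l < b`;
in particular `G` is not `(b, l)`-tough. -/
theorem statement6 (b l n : ℕ) (hb : 1 ≤ b) (hl : 2 ≤ l) (hn : (b + 1) * l - 1 ≤ n) :
    lToughness (joinCliques (b * l - 1)
        (fun i : Fin l => if i.val = 0 then n + 2 - (b + 1) * l else 1)) l
      ≤ ((b * l - 1 : ℕ) : ℝ≥0∞) / (l : ℝ≥0∞) ∧
    ((b * l - 1 : ℕ) : ℝ≥0∞) / (l : ℝ≥0∞) < (b : ℝ≥0∞) := by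
  classical
  have hl0 : 0 < l := by omega
  have hbl : 2 ≤ b * l := le_trans hl (Nat.le_mul_of_pos_left l hb)
  set ns : Fin l → ℕ := fun i : Fin l => if i.val = 0 then n + 2 - (b + 1) * l else 1 with hns
  have hns1 : ∀ i, 1 ≤ ns i := by
    intro i
    have h1 : 1 ≤ (b + 1) * l := by
      calc 1 ≤ l := by omega
      _ ≤ (b+1) * l := Nat.le_mul_of_pos_left l (by omega)
    simp only [hns]
    split
    · omega
    · omega
  set V := Fin (b * l - 1) ⊕ (Σ i : Fin l, Fin (ns i)) with hV
  set G := joinCliques (b * l - 1) ns with hG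
  set S : Finset V := Finset.univ.image Sum.inl with hS
  have hScoe : (S : Set V) = {v | v.isLeft} := by
    ext v
    simp only [hS, Finset.coe_image, Finset.coe_univ, Set.image_univ, Set.mem_range,
      Set.mem_setOf_eq]
    constructor
    · rintro ⟨a, rfl⟩; rfl
    · intro h
      rcases v with a | p
      · exact ⟨a, rfl⟩
      · simp at h
  have hcomp : numComp G (S : Set V) = l := by
    rw [hScoe]
    exact numComp_joinCliques (b * l - 1) l hl0 ns hns1
  have hcard : S.card = b * l - 1 := by
    rw [hS, Finset.card_image_of_injective _ Sum.inl_injective, Finset.card_univ,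
      Fintype.card_fin]
  constructor
  · have h1 : lToughness G l ≤ (S.card : ℝ≥0∞) / (numComp G (S : Set V) : ℝ≥0∞) := by
      unfold lToughness
      exact iInf₂_le (f := fun (T : Finset V) (_ : l ≤ numComp G (T : Set V)) =>
        (T.card : ℝ≥0∞) / (numComp G (T : Set V) : ℝ≥0∞)) S (le_of_eq hcomp.symm)
    rwa [hcard, hcomp] at h1
  · rw [ENNReal.div_lt_iff (Or.inl (by exact_mod_cast hl0.ne')) (Or.inl (ENNReal.natCast_ne_top l))]
    rw [← Nat.cast_mul, Nat.cast_lt]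
    omega
end

section
/- Let b ≥ 1 and l ≥ 2 be integers, let n ≥ max{(5b²/2 + 4b + 3)l − b² − 2b − 5, ((2b+1)l² + (2b−3)l + 2)/2}, and set ω = ⌈(n+2)/(b+1)⌉. Then q(K_{n−ω} ∨ ωK_1) < 2n − 2l. -/
open scoped Classical ENNReal

lemma spectrum_lt_of_rowsum {V : Type*} [Fintype V] [DecidableEq V]
    (M : Matrix V V ℝ) (hM : ∀ u v, 0 ≤ M u v)
    (w : V → ℝ) (hw : ∀ u, 0 < w u) {c : ℝ}
    (hrow : ∀ u, ∑ v, M u v * w v < c * w u) :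
    ∀ μ ∈ spectrum ℝ M, μ < c := by
  intro μ hμ
  rw [spectrum.mem_iff] at hμ
  have hdet : ((algebraMap ℝ (Matrix V V ℝ)) μ - M).det = 0 := by
    by_contra h
    exact hμ ((Matrix.isUnit_iff_isUnit_det _).2 (isUnit_iff_ne_zero.2 h))
  obtain ⟨x, hx0, hx⟩ := Matrix.exists_mulVec_eq_zero_iff.2 hdet
  have heig : ∀ u, ∑ v, M u v * x v = μ * x u := by
    intro u
    have := congrFun hx u
    rw [Algebra.algebraMap_eq_smul_one, Matrix.sub_mulVec, Matrix.smul_mulVec,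
      Matrix.one_mulVec] at this
    have h2 : (μ • x) u - M.mulVec x u = 0 := this
    simp only [Pi.smul_apply, smul_eq_mul] at h2
    have : M.mulVec x u = μ * x u := by linarith
    simpa [Matrix.mulVec, dotProduct] using this
  obtain ⟨u, -, hu⟩ := Finset.exists_max_image Finset.univ (fun v => |x v| / w v)
    (by
      obtain ⟨v, hv⟩ := Function.ne_iff.1 hx0
      exact ⟨v, Finset.mem_univ v⟩)
  set r := |x u| / w u with hr
  have hrpos : 0 < r := by
    obtain ⟨v, hv⟩ := Function.ne_iff.1 hx0
    have := hu v (Finset.mem_univ v)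
    have h1 : 0 < |x v| / w v := div_pos (abs_pos.2 hv) (hw v)
    linarith
  have hxu : 0 < |x u| := by
    rcases div_pos_iff.1 hrpos with ⟨h, -⟩ | ⟨-, h⟩
    · exact h
    · linarith [hw u]
  have hbound : ∀ v, |x v| ≤ r * w v := by
    intro v
    have h := hu v (Finset.mem_univ v)
    rwa [div_le_iff₀ (hw v)] at h
  have key : μ * |x u| < c * |x u| := by
    calc μ * |x u| ≤ |μ * x u| := by
          rw [abs_mul]
          exact mul_le_mul_of_nonneg_right (le_abs_self μ) (abs_nonneg _)
      _ = |∑ v, M u v * x v| := by rw [heig u]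
      _ ≤ ∑ v, |M u v * x v| := Finset.abs_sum_le_sum_abs _ _
      _ = ∑ v, M u v * |x v| := by
          refine Finset.sum_congr rfl fun v _ => ?_
          rw [abs_mul, abs_of_nonneg (hM u v)]
      _ ≤ ∑ v, M u v * (r * w v) := by
          refine Finset.sum_le_sum fun v _ => mul_le_mul_of_nonneg_left (hbound v) (hM u v)
      _ = r * ∑ v, M u v * w v := by
          rw [Finset.mul_sum]; exact Finset.sum_congr rfl fun v _ => by ring
      _ < r * (c * w u) := mul_lt_mul_of_pos_left (hrow u) hrpos
      _ = c * (r * w u) := by ring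
      _ = c * |x u| := by rw [hr, div_mul_cancel₀]; exact (hw u).ne'
  exact lt_of_mul_lt_mul_right key (le_of_lt hxu)


set_option maxHeartbeats 1000000 in
/-- For `b ≥ 1`, `l ≥ 2`,
`n ≥ max{(5b²/2 + 4b + 3)l − b² − 2b − 5, ((2b+1)l² + (2b−3)l + 2)/2}`, and
`ω = ⌈(n+2)/(b+1)⌉ = (n + b + 2)/(b + 1)` (natural division):
`q(K_{n−ω} ∨ ωK₁) < 2n − 2l`. -/
theorem statement10 (b l n : ℕ) (hb : 1 ≤ b) (hl : 2 ≤ l)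
    (hn1 : ((5 * b ^ 2 + 8 * b + 6) * l - 2 * b ^ 2 - 4 * b - 10 : ℤ) ≤ 2 * n)
    (hn2 : ((2 * b + 1) * l ^ 2 + (2 * b - 3) * l + 2 : ℤ) ≤ 2 * n) :
    qIndex (joinCliques (n - (n + b + 2) / (b + 1))
        (fun _ : Fin ((n + b + 2) / (b + 1)) => 1))
      < 2 * (n : ℝ) - 2 * (l : ℝ) := by
  set ω : ℕ := (n + b + 2) / (b + 1) with hωdef
  set s : ℕ := n - ω with hsdef
  -- ground facts in ℤ
  have hdm : (b + 1) * ω + (n + b + 2) % (b + 1) = n + b + 2 := Nat.div_add_mod _ _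
  have hmod : (n + b + 2) % (b + 1) < b + 1 := Nat.mod_lt _ (by omega)
  have hW1 : (n : ℤ) + 2 ≤ ((b : ℤ) + 1) * ω := by
    have h : n + 2 ≤ (b + 1) * ω := by omega
    exact_mod_cast h
  have hW2 : ((b : ℤ) + 1) * ω ≤ (n : ℤ) + b + 2 := by
    have h : (b + 1) * ω ≤ n + b + 2 := by omega
    exact_mod_cast h
  have hbZ : (1 : ℤ) ≤ b := by exact_mod_cast hb
  have hlZ : (2 : ℤ) ≤ l := by exact_mod_cast hl
  have hnZ : (0 : ℤ) ≤ n := Int.natCast_nonneg n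
  have hW0 : (0 : ℤ) ≤ ω := Int.natCast_nonneg ω
  have hL2 : (0 : ℤ) ≤ (l : ℤ) - 2 := by linarith
  have hB1 : (0 : ℤ) ≤ (b : ℤ) - 1 := by linarith
  have hB0 : (0 : ℤ) ≤ (b : ℤ) := by linarith
  have hL0 : (0 : ℤ) ≤ (l : ℤ) := by linarith
  have pbl : (0 : ℤ) ≤ (b : ℤ) * l := mul_nonneg hB0 hL0
  have p5 : (0 : ℤ) ≤ ((b : ℤ) - 1) * b := mul_nonneg hB1 hB0
  have p1 : (0 : ℤ) ≤ ((l : ℤ) - 2) * ((2 * b + 1) * (l + 2) + 2 * b - 3) :=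
    mul_nonneg hL2 (by linarith [pbl])
  have hnbig : 6 * (b : ℤ) ≤ n := by linarith [hn2, p1]
  have hωn : ω ≤ n := by
    have p2 : (0 : ℤ) ≤ ((b : ℤ) - 1) * ω := mul_nonneg hB1 hW0
    have h : (ω : ℤ) ≤ n := by linarith [hW2, p2, hnbig, hbZ]
    exact_mod_cast h
  have hω2l : 2 * l ≤ ω := by
    by_contra hcon
    push_neg at hcon
    have hc2 : (ω : ℤ) ≤ 2 * l - 1 := by omega
    have p3 : ((b : ℤ) + 1) * ω ≤ ((b : ℤ) + 1) * (2 * l - 1) :=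
      mul_le_mul_of_nonneg_left hc2 (by linarith)
    have p4 : (0 : ℤ) ≤ ((l : ℤ) - 2) * (5 * b ^ 2 + 4 * b + 2) :=
      mul_nonneg hL2 (by positivity)
    linarith [hW1, p3, p4, hn1, p5, hbZ]
  have hsω : s + ω = n := by omega
  have hclZ : 2 * (l : ℤ) < 2 * n := by
    have p6 : (0 : ℤ) ≤ ((b : ℤ) - 1) * l ^ 2 := mul_nonneg hB1 (sq_nonneg _)
    have p7 : (0 : ℤ) ≤ ((b : ℤ) - 1) * l := mul_nonneg hB1 hL0
    have p8 : (0 : ℤ) ≤ (l : ℤ) * (l - 2) := mul_nonneg hL0 hL2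
    linarith [hn2, p6, p7, p8, hlZ]
  -- the main quadratic inequality
  have hmain : ((n : ℤ) - ω) * ω < ((n : ℤ) + ω - 2 * l) * ((ω : ℤ) - 2 * l + 1) := by
    have p8 : (0 : ℤ) ≤ (l : ℤ) * (l - 2) := mul_nonneg hL0 hL2
    have p9 : (0 : ℤ) ≤ (b : ℤ) ^ 2 * (l - 2) := mul_nonneg (sq_nonneg _) hL2
    have hc1 : (0 : ℤ) ≤ 2 * n + (8 + (1 - 4 * l) * (b + 1) + (1 - 2 * l) * (b + 1) ^ 2) := by
      linarith [hn1, p9, p5, hbZ]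
    have pA : (0 : ℤ) ≤ ((b : ℤ) - 1) * (4 * l ^ 2 - 2 * l) :=
      mul_nonneg hB1 (by linarith [p8])
    have pB : (0 : ℤ) ≤ ((b : ℤ) + 1) * (((b : ℤ) - 1) * (4 * l ^ 2 - 2 * l)) :=
      mul_nonneg (by linarith) pA
    have pC : (0 : ℤ) ≤ ((b : ℤ) + 1) * (8 * l ^ 2 - 12 * l + 2) :=
      mul_nonneg (by linarith) (by linarith [p8])
    have hc0 : (0 : ℤ) < 8 + 2 * (1 - 4 * l) * (b + 1) + (b + 1) ^ 2 * (4 * l ^ 2 - 2 * l) := by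
      linarith [pB, pC]
    have pD : (0 : ℤ) ≤ (n : ℤ) *
        (2 * n + (8 + (1 - 4 * l) * (b + 1) + (1 - 2 * l) * (b + 1) ^ 2)) :=
      mul_nonneg hnZ hc1
    have hP : (0 : ℤ) < 2 * ((n : ℤ) + 2) ^ 2 + ((n : ℤ) + 2) * ((1 - 4 * l) * (b + 1))
        + (b + 1) ^ 2 * ((n : ℤ) * (1 - 2 * l) + 4 * l ^ 2 - 2 * l) := by
      linarith [pD, hc0]
    have pE : (0 : ℤ) ≤ ((l : ℤ) - 2) * (10 * b ^ 2 + 12 * b + 8) :=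
      mul_nonneg hL2 (by positivity)
    have hbr : (0 : ℤ) ≤ 2 * (((b : ℤ) + 1) * ω + n + 2) - (4 * l - 1) * (b + 1) := by
      linarith [hn1, hW1, pE, p5, hbZ]
    have pF : (0 : ℤ) ≤ (((b : ℤ) + 1) * ω - (n + 2)) *
        (2 * (((b : ℤ) + 1) * ω + n + 2) - (4 * l - 1) * (b + 1)) :=
      mul_nonneg (by linarith) hbr
    have key : (0 : ℤ) < ((b : ℤ) + 1) ^ 2 *
        (((n : ℤ) + ω - 2 * l) * ((ω : ℤ) - 2 * l + 1) - ((n : ℤ) - ω) * ω) := by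
      linarith [pF, hP]
    by_contra hcon
    push_neg at hcon
    have h2 : ((b : ℤ) + 1) ^ 2 *
        (((n : ℤ) + ω - 2 * l) * ((ω : ℤ) - 2 * l + 1) - ((n : ℤ) - ω) * ω) ≤ 0 :=
      mul_nonpos_of_nonneg_of_nonpos (sq_nonneg _) (by linarith)
    linarith
  -- now the graph side
  set G := joinCliques s (fun _ : Fin ω => 1) with hG
  have adj_inl : ∀ (a : Fin s) v, G.Adj (Sum.inl a) v ↔ v ≠ Sum.inl a := by
    intro a v
    rw [hG]
    constructor
    · rintro ⟨hne, -⟩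
      exact hne.symm
    · intro h
      exact ⟨h.symm, Or.inl ⟨a, rfl⟩⟩
  have adj_inr : ∀ (p : Σ _ : Fin ω, Fin 1) v,
      G.Adj (Sum.inr p) v ↔ ∃ a : Fin s, v = Sum.inl a := by
    intro p v
    rw [hG]
    constructor
    · rintro ⟨hne, h⟩
      rcases h with ⟨a, ha⟩ | h | ⟨i, x, y, hx, hy⟩
      · exact absurd ha (by simp)
      · exact h
      · exfalso
        have hxy : x = y := Subsingleton.elim x y
        subst hxy
        exact hne (hx.trans hy.symm)
    · rintro ⟨a, rfl⟩
      exact ⟨by simp, Or.inr (Or.inl ⟨a, rfl⟩)⟩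
  have hcardV : Fintype.card (Fin s ⊕ (Σ _ : Fin ω, Fin 1)) = s + ω := by simp
  have hns_inl : ∀ a : Fin s, ((G.neighborSet (Sum.inl a)).ncard : ℝ) = (s : ℝ) + ω - 1 := by
    intro a
    have hset : G.neighborSet (Sum.inl a) = {Sum.inl a}ᶜ := by
      ext v
      simp [SimpleGraph.mem_neighborSet, adj_inl a v]
    rw [hset]
    rw [Set.compl_eq_univ_diff, Set.ncard_diff_singleton_of_mem (Set.mem_univ _), Set.ncard_univ,
      Nat.card_eq_fintype_card, hcardV]
    have hge : 1 ≤ s + ω := by omega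
    push_cast [Nat.cast_sub hge]
    ring
  have hns_inr : ∀ p : (Σ _ : Fin ω, Fin 1),
      ((G.neighborSet (Sum.inr p)).ncard : ℝ) = (s : ℝ) := by
    intro p
    have hset : G.neighborSet (Sum.inr p) = Set.range Sum.inl := by
      ext v
      simp only [SimpleGraph.mem_neighborSet, adj_inr p v, Set.mem_range]
      exact ⟨fun ⟨a, h⟩ => ⟨a, h.symm⟩, fun ⟨a, h⟩ => ⟨a, h.symm⟩⟩
    rw [hset, ← Nat.card_coe_set_eq, Nat.card_range_of_injective Sum.inl_injective,
      Nat.card_eq_fintype_card, Fintype.card_fin]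
  -- weights
  set w : (Fin s ⊕ (Σ _ : Fin ω, Fin 1)) → ℝ :=
    Sum.elim (fun _ => (ω : ℝ)) (fun _ => (ω : ℝ) - 2 * l + 1) with hwdef
  have hω2lR : 2 * (l : ℝ) ≤ (ω : ℝ) := by exact_mod_cast hω2l
  have hlR : (2 : ℝ) ≤ (l : ℝ) := by exact_mod_cast hl
  have hωposR : (0 : ℝ) < ω := by linarith
  have hw : ∀ u, 0 < w u := by
    rintro (a | p) <;> simp [hwdef] <;> linarith
  have hsR : (s : ℝ) = (n : ℝ) - ω := by
    have : (s : ℤ) = (n : ℤ) - ω := by omega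
    exact_mod_cast this
  have hWtot : ∑ v, w v = s * (ω : ℝ) + ω * ((ω : ℝ) - 2 * l + 1) := by
    rw [Fintype.sum_sum_type]
    simp only [hwdef, Sum.elim_inl, Sum.elim_inr, Finset.sum_const, Finset.card_univ,
      Fintype.card_fin, Fintype.card_sigma, Finset.sum_const, smul_eq_mul, nsmul_eq_mul,
      mul_one, Nat.cast_sum, Nat.cast_one]
    try push_cast
    try ring
  have hsplit : ∀ u, ∑ v, signlessLaplacian G u v * w v
      = ((G.neighborSet u).ncard : ℝ) * w u + ∑ v ∈ G.neighborFinset u, w v := by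
    intro u
    simp only [signlessLaplacian, Matrix.of_apply, add_mul, Finset.sum_add_distrib,
      ite_mul, zero_mul, one_mul]
    congr 1
    · simp [Finset.sum_ite_eq]
    · rw [SimpleGraph.neighborFinset_eq_filter, Finset.sum_filter]
  have hrow : ∀ u, ∑ v, signlessLaplacian G u v * w v < (2 * (n : ℝ) - 2 * (l : ℝ)) * w u := by
    rintro (a | p)
    · rw [hsplit, hns_inl a]
      have hnf : G.neighborFinset (Sum.inl a) = Finset.univ.erase (Sum.inl a) := by
        ext v
        simp [SimpleGraph.mem_neighborFinset, adj_inl a v]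
      rw [hnf, Finset.sum_erase_eq_sub (Finset.mem_univ _), hWtot]
      have hwa : w (Sum.inl a) = (ω : ℝ) := by simp [hwdef]
      rw [hwa]
      have hprod : (s : ℝ) * ω = ((n : ℝ) - ω) * ω := by rw [hsR]
      linarith [hprod, hωposR]
    · rw [hsplit, hns_inr p]
      have hnf : G.neighborFinset (Sum.inr p) = Finset.univ.image Sum.inl := by
        ext v
        simp only [SimpleGraph.mem_neighborFinset, adj_inr p v, Finset.mem_image,
          Finset.mem_univ, true_and]
        exact ⟨fun ⟨a, h⟩ => ⟨a, h.symm⟩, fun ⟨a, h⟩ => ⟨a, h.symm⟩⟩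
      have himg : ∑ v ∈ Finset.univ.image Sum.inl, w v = (s : ℝ) * ω := by
        rw [Finset.sum_image (fun x _ y _ h => Sum.inl_injective h)]
        simp [hwdef]
      rw [hnf, himg]
      have hwp : w (Sum.inr p) = (ω : ℝ) - 2 * l + 1 := by simp [hwdef]
      rw [hwp]
      have hmainR : ((n : ℝ) - ω) * ω < ((n : ℝ) + ω - 2 * l) * ((ω : ℝ) - 2 * l + 1) := by
        exact_mod_cast hmain
      have hprod1 : (s : ℝ) * ((ω : ℝ) - 2 * l + 1)
          = ((n : ℝ) - ω) * ((ω : ℝ) - 2 * l + 1) := by rw [hsR]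
      have hprod2 : (s : ℝ) * ω = ((n : ℝ) - ω) * ω := by rw [hsR]
      linarith [hmainR, hprod1, hprod2]
  have hQnn : ∀ u v, 0 ≤ signlessLaplacian G u v := by
    intro u v
    simp only [signlessLaplacian, Matrix.of_apply]
    apply add_nonneg <;> split_ifs <;> simp [Nat.cast_nonneg]
  have hlt := spectrum_lt_of_rowsum (signlessLaplacian G) hQnn w hw hrow
  have hcR : (0 : ℝ) < 2 * (n : ℝ) - 2 * (l : ℝ) := by
    have : (2 : ℝ) * l < 2 * n := by exact_mod_cast hclZ
    linarith
  rcases (spectrum ℝ (signlessLaplacian G)).eq_empty_or_nonempty with he | hne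
  · rw [qIndex, he, Real.sSup_empty]
    linarith
  · exact hlt _ (hne.csSup_mem (Matrix.finite_spectrum _))
end
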